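/- X-spider fusion is sound: for natural numbers m, n and k ≥ 1, define the m-fold Hadamard matrix H^{⊗m} as the complex matrix indexed by functions Fin m → Fin 2 with (x,y) entry 2^{−m/2}·(−1)^{Σᵢ xᵢ·yᵢ}, and define the X-spider matrix X_{m,n}(θ) := H^{⊗n} · Z_{m,n}(θ) · H^{⊗m}. Then for all real α, β, the product X_{k,n}(β) · X_{m,k}(α) equals X_{m,n}(α + β). -/

import Mathlib

open Complex

/-- The Z-spider matrix `Z_{m,n}(θ)`: the matrix of
`|0⟩^{⊗n}⟨0|^{⊗m} + e^{iθ}|1⟩^{⊗n}⟨1|^{⊗m}`. -/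
noncomputable def Zspider (m n : ℕ) (θ : ℝ) :
    Matrix (Fin n → Fin 2) (Fin m → Fin 2) ℂ :=
  fun y x =>
    (if (∀ j, y j = 0) ∧ (∀ i, x i = 0) then 1 else 0)
      + (if (∀ j, y j = 1) ∧ (∀ i, x i = 1) then Complex.exp (θ * Complex.I) else 0)

/-- The `m`-fold Hadamard matrix `H^{⊗m}`, with `(x,y)` entry
`2^{−m/2}·(−1)^{Σᵢ xᵢ·yᵢ}` (components of `Fin 2` read as the integers `0`, `1`). -/
noncomputable def Hpow (m : ℕ) : Matrix (Fin m → Fin 2) (Fin m → Fin 2) ℂ :=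
  fun x y =>
    (((2 : ℝ) ^ (-(m : ℝ) / 2) : ℝ) : ℂ) * (-1 : ℂ) ^ (∑ i, (x i : ℕ) * (y i : ℕ))

/-- The X-spider matrix `X_{m,n}(θ) := H^{⊗n} · Z_{m,n}(θ) · H^{⊗m}`. -/
noncomputable def Xspider (m n : ℕ) (θ : ℝ) :
    Matrix (Fin n → Fin 2) (Fin m → Fin 2) ℂ :=
  Hpow n * Zspider m n θ * Hpow m

lemma Hpow_mul_self (m : ℕ) : Hpow m * Hpow m = 1 := by
  ext x z
  simp only [Matrix.mul_apply, Hpow]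
  have key : ∀ y : Fin m → Fin 2,
      ((((2 : ℝ) ^ (-(m : ℝ) / 2) : ℝ) : ℂ) * (-1 : ℂ) ^ (∑ i, (x i : ℕ) * (y i : ℕ)))
        * ((((2 : ℝ) ^ (-(m : ℝ) / 2) : ℝ) : ℂ) * (-1 : ℂ) ^ (∑ i, (y i : ℕ) * (z i : ℕ)))
      = (((2 : ℝ) ^ (-(m : ℝ)) : ℝ) : ℂ)
          * ∏ i, ((-1 : ℂ) ^ ((x i : ℕ) * (y i : ℕ)) * (-1 : ℂ) ^ ((y i : ℕ) * (z i : ℕ))) := by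
    intro y
    rw [Finset.prod_mul_distrib, Finset.prod_pow_eq_pow_sum, Finset.prod_pow_eq_pow_sum]
    have : ((2 : ℝ) ^ (-(m : ℝ) / 2)) * ((2 : ℝ) ^ (-(m : ℝ) / 2)) = (2 : ℝ) ^ (-(m : ℝ)) := by
      rw [← Real.rpow_add (by norm_num)]; ring_nf
    push_cast [← this]
    ring
  simp only [key, ← Finset.mul_sum]
  rw [← Fintype.piFinset_univ,
    ← Finset.prod_univ_sum (fun _ : Fin m => (Finset.univ : Finset (Fin 2)))
      (fun i a => (-1:ℂ)^((x i : ℕ) * (a:ℕ)) * (-1:ℂ)^((a:ℕ) * (z i : ℕ)))]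
  have factor : ∀ i : Fin m,
      (∑ a : Fin 2, (-1 : ℂ) ^ ((x i : ℕ) * (a : ℕ)) * (-1 : ℂ) ^ ((a : ℕ) * (z i : ℕ)))
      = if x i = z i then 2 else 0 := by
    intro i
    have h1 : x i = 0 ∨ x i = 1 := by omega
    have h2 : z i = 0 ∨ z i = 1 := by omega
    rcases h1 with h1 | h1 <;> rcases h2 with h2 | h2 <;>
      simp [h1, h2, Fin.sum_univ_two] <;> norm_num
  simp only [factor]
  by_cases h : x = z
  · subst h
    simp [Matrix.one_apply]
  · obtain ⟨i, hi⟩ := Function.ne_iff.mp h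
    rw [Matrix.one_apply_ne h, Finset.prod_eq_zero (Finset.mem_univ i) (by simp [hi])]
    ring

lemma ite_zero_mul_ite_zero' (P Q : Prop) [Decidable P] [Decidable Q] (a b : ℂ) :
    (if P then a else 0) * (if Q then b else 0) = if P ∧ Q then a * b else 0 := by
  by_cases hP : P <;> by_cases hQ : Q <;> simp [hP, hQ]

lemma Zspider_fuse (m n k : ℕ) (hk : 1 ≤ k) (α β : ℝ) :
    Zspider k n β * Zspider m k α = Zspider m n (α + β) := by
  ext y x
  simp only [Matrix.mul_apply, Zspider]
  have h01 : ((fun _ => 0 : Fin k → Fin 2) ≠ fun _ => 1) := fun h =>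
    Fin.zero_ne_one (congrFun h ⟨0, hk⟩)
  have key : ∀ w : Fin k → Fin 2,
      ((if (∀ j, y j = 0) ∧ (∀ i, w i = 0) then 1 else 0)
        + (if (∀ j, y j = 1) ∧ (∀ i, w i = 1) then Complex.exp (β * Complex.I) else 0))
      * ((if (∀ j, w j = 0) ∧ (∀ i, x i = 0) then 1 else 0)
        + (if (∀ j, w j = 1) ∧ (∀ i, x i = 1) then Complex.exp (α * Complex.I) else 0))
      = (if w = (fun _ => 0) then
          (if (∀ j, y j = 0) ∧ (∀ i, x i = 0) then 1 else 0) else 0)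
        + (if w = (fun _ => 1) then
          (if (∀ j, y j = 1) ∧ (∀ i, x i = 1) then
            Complex.exp (β * Complex.I) * Complex.exp (α * Complex.I) else 0) else 0) := by
    intro w
    by_cases h0 : w = fun _ => 0
    · subst h0
      have e0 : ∀ i : Fin k, (fun _ => (0 : Fin 2)) i = 0 := fun _ => rfl
      have e1 : ¬(∀ i : Fin k, (fun _ => (0 : Fin 2)) i = 1) := fun h =>
        Fin.zero_ne_one (h ⟨0, hk⟩)
      have c2 : ¬((∀ j, y j = 1) ∧ ∀ i : Fin k, (fun _ => (0 : Fin 2)) i = 1) :=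
        fun h => e1 h.2
      have c4 : ¬((∀ j : Fin k, (fun _ => (0 : Fin 2)) j = 1) ∧ ∀ i, x i = 1) :=
        fun h => e1 h.1
      rw [if_neg c2, if_neg c4, if_pos rfl, if_neg h01,
        if_congr (and_iff_left e0) rfl rfl, if_congr (and_iff_right e0) rfl rfl,
        add_zero, add_zero, add_zero, ite_zero_mul_ite_zero', one_mul]
    · by_cases h1 : w = fun _ => 1
      · subst h1
        have h10 : ((fun _ => 1 : Fin k → Fin 2) ≠ fun _ => 0) := fun h => h01 h.symm
        have e1 : ∀ i : Fin k, (fun _ => (1 : Fin 2)) i = 1 := fun _ => rfl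
        have e0 : ¬(∀ i : Fin k, (fun _ => (1 : Fin 2)) i = 0) := fun h =>
          Fin.zero_ne_one (h ⟨0, hk⟩).symm
        have c1 : ¬((∀ j, y j = 0) ∧ ∀ i : Fin k, (fun _ => (1 : Fin 2)) i = 0) :=
          fun h => e0 h.2
        have c3 : ¬((∀ j : Fin k, (fun _ => (1 : Fin 2)) j = 0) ∧ ∀ i, x i = 0) :=
          fun h => e0 h.1
        rw [if_neg c1, if_neg c3, if_neg h10, if_pos rfl,
          if_congr (and_iff_left e1) rfl rfl, if_congr (and_iff_right e1) rfl rfl,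
          zero_add, zero_add, zero_add, ite_zero_mul_ite_zero']
      · have hw0 : ¬(∀ i, w i = 0) := fun h => h0 (funext h)
        have hw1 : ¬(∀ i, w i = 1) := fun h => h1 (funext h)
        have c1 : ¬((∀ j, y j = 0) ∧ ∀ i, w i = 0) := fun h => hw0 h.2
        have c2 : ¬((∀ j, y j = 1) ∧ ∀ i, w i = 1) := fun h => hw1 h.2
        rw [if_neg c1, if_neg c2, if_neg h0, if_neg h1, add_zero, zero_mul]
  simp only [key]
  rw [Finset.sum_add_distrib, Finset.sum_ite_eq' Finset.univ, Finset.sum_ite_eq' Finset.univ]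
  simp only [Finset.mem_univ, if_true]
  congr 1
  by_cases h : (∀ j, y j = 1) ∧ (∀ i, x i = 1) <;> simp [h, ← Complex.exp_add]
  ring_nf


/-- X-spider fusion is sound: for `k ≥ 1`,
`X_{k,n}(β) · X_{m,k}(α) = X_{m,n}(α + β)`. -/
theorem Xspider_fusion (m n k : ℕ) (hk : 1 ≤ k) (α β : ℝ) :
    Xspider k n β * Xspider m k α = Xspider m n (α + β) := by
  calc Xspider k n β * Xspider m k α
      = Hpow n * (Zspider k n β * (Hpow k * Hpow k * (Zspider m k α * Hpow m))) := by
        simp only [Xspider, Matrix.mul_assoc]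
    _ = Hpow n * (Zspider k n β * Zspider m k α * Hpow m) := by
        rw [Hpow_mul_self, Matrix.one_mul, ← Matrix.mul_assoc (Zspider k n β)]
    _ = Xspider m n (α + β) := by
        rw [Zspider_fuse m n k hk α β, Xspider, Matrix.mul_assoc]
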